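/- Let 𝔗 be the affine fan induced by a strongly convex rational polyhedral cone τ and let ν be a ray not contained in τ such that Cone(τ, ν) is strongly convex. Then Ext(𝔗, ν) is a fan. Moreover, if 𝔗 is 𝔈-simplicial for a set of rays 𝔈 of 𝔗, then Ext(𝔗, ν) is (𝔈 ∪ {ν})-simplicial. -/

import Mathlib

namespace ToricPaper

open scoped BigOperators

/-- The ambient space `N_ℚ = ℚ^n`. -/
abbrev V (n : ℕ) := Fin n → ℚ

variable {n : ℕ}

/-- The cone of nonnegative rational combinations of elements of `A`. -/
def coneHull (A : Set (V n)) : Set (V n) :=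
  {x | ∃ t : Finset (V n), ↑t ⊆ A ∧ ∃ c : V n → ℚ,
    (∀ v ∈ t, 0 ≤ c v) ∧ x = ∑ v ∈ t, c v • v}

/-- A rational polyhedral cone: the cone generated by finitely many vectors. -/
def IsPolyCone (σ : Set (V n)) : Prop := ∃ S : Finset (V n), σ = coneHull (S : Set (V n))

/-- A cone is strongly convex if it contains no line. -/
def StronglyConvex (σ : Set (V n)) : Prop := ∀ x ∈ σ, -x ∈ σ → x = 0

/-- `F` is a face of `σ`, cut out by a linear functional nonnegative on `σ`. -/
def IsFaceOf (F σ : Set (V n)) : Prop :=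
  ∃ m : (V n) →ₗ[ℚ] ℚ, (∀ x ∈ σ, 0 ≤ m x) ∧ F = {x ∈ σ | m x = 0}

/-- Dimension of a cone: the rank of its linear span. -/
noncomputable def coneDim (σ : Set (V n)) : ℕ := Module.finrank ℚ (Submodule.span ℚ σ)

/-- A ray of a cone is a one-dimensional face. -/
def IsRayOf (ν σ : Set (V n)) : Prop := IsFaceOf ν σ ∧ coneDim ν = 1

/-- An abstract ray: a one-dimensional strongly convex rational polyhedral cone. -/
def IsRay (ν : Set (V n)) : Prop := IsPolyCone ν ∧ StronglyConvex ν ∧ coneDim ν = 1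

/-- All faces of a cone `τ` (the affine fan induced by `τ`). -/
def faces (τ : Set (V n)) : Set (Set (V n)) := {F | IsFaceOf F τ}

/-- The rays of a cone `τ`. -/
def raysOf (τ : Set (V n)) : Set (Set (V n)) := {ν | IsRayOf ν τ}

/-- A fan: a finite collection of strongly convex rational polyhedral cones, closed under
taking faces, such that the intersection of two cones is a face of each. -/
def IsFan (X : Set (Set (V n))) : Prop :=
  X.Finite ∧ (∀ σ ∈ X, IsPolyCone σ ∧ StronglyConvex σ) ∧
  (∀ σ ∈ X, ∀ F, IsFaceOf F σ → F ∈ X) ∧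
  (∀ σ ∈ X, ∀ σ' ∈ X, IsFaceOf (σ ∩ σ') σ ∧ IsFaceOf (σ ∩ σ') σ')

/-- The rays (one-dimensional cones) belonging to a collection of cones. -/
def raysIn (X : Set (Set (V n))) : Set (Set (V n)) := {ν | ν ∈ X ∧ coneDim ν = 1}

/-- The support of a collection of cones. -/
def support (X : Set (Set (V n))) : Set (V n) := ⋃₀ X

/-- The data of a fan quadruple `(X, !B, *C, !*H)`: three pairwise disjoint sets of rays. -/
def IsQuadData (X B C H : Set (Set (V n))) : Prop :=
  B ⊆ raysIn X ∧ C ⊆ raysIn X ∧ H ⊆ raysIn X ∧ Disjoint B C ∧ Disjoint B H ∧ Disjoint C H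

/-- The data of a fan triple `(X, !B, *C)`: two disjoint sets of rays. -/
def IsTripleData (X B C : Set (Set (V n))) : Prop :=
  B ⊆ raysIn X ∧ C ⊆ raysIn X ∧ Disjoint B C

/-- `ρ` is a sorting function for the (restricted) quadruple on the faces of `ξ`:
nonnegative on rays of `ξ` in `B`, nonpositive on rays of `ξ` in `C`, zero on rays of `ξ`
in none of `B`, `C`, `H`. -/
def IsSortingOn (ξ : Set (V n)) (B C H : Set (Set (V n))) (ρ : (V n) →ₗ[ℚ] ℚ) : Prop :=
  (∀ ν, IsRayOf ν ξ → ν ∈ B → ∀ x ∈ ν, 0 ≤ ρ x) ∧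
  (∀ ν, IsRayOf ν ξ → ν ∈ C → ∀ x ∈ ν, ρ x ≤ 0) ∧
  (∀ ν, IsRayOf ν ξ → ν ∉ B → ν ∉ C → ν ∉ H → ∀ x ∈ ν, ρ x = 0)

/-- The (restricted) affine quadruple on the faces of `ξ` admits a `Cf`-strict sorting
function: a sorting function which is moreover negative on `ν ∖ {0}` for every `ν ∈ Cf`. -/
def HasStrictSortingOn (ξ : Set (V n)) (B C H Cf : Set (Set (V n))) : Prop :=
  ∃ ρ : (V n) →ₗ[ℚ] ℚ, IsSortingOn ξ B C H ρ ∧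
    ∀ ν, IsRayOf ν ξ → ν ∈ Cf → ∀ x ∈ ν, x ≠ 0 → ρ x < 0

/-- A cone `ξ` is `E`-unsettled if no ray of `ξ` lies in `E`. -/
def Unsettled (E : Set (Set (V n))) (ξ : Set (V n)) : Prop := ∀ ν, IsRayOf ν ξ → ν ∉ E

/-- The quadruple `(X, !B, *C, !*H)` is `(Bs, Cf, Hs)`-sorted. -/
def SortedOn (X B C H Bs Cf Hs : Set (Set (V n))) : Prop :=
  ∀ ξ ∈ X, Unsettled ((B \ Bs) ∪ (H \ Hs)) ξ → HasStrictSortingOn ξ B C H Cf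

/-- Partially-sorted: `(∅, C, ∅)`-sorted. -/
def PartiallySortedOn (X B C H : Set (Set (V n))) : Prop := SortedOn X B C H ∅ C ∅

/-- Well-sorted: `(B, C, H)`-sorted. -/
def WellSortedOn (X B C H : Set (Set (V n))) : Prop := SortedOn X B C H B C H

/-- A simplicial cone is generated by linearly independent vectors. -/
def IsSimplicialCone (σ : Set (V n)) : Prop :=
  ∃ S : Finset (V n), LinearIndependent ℚ (fun v : S => (v : V n)) ∧
    σ = coneHull (S : Set (V n))

/-- A collection of cones is `E`-simplicial: every cone having a ray of `E` as a face is the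
join of that ray with a cone of the collection of one less dimension. -/
def ESimplicialOn (X E : Set (Set (V n))) : Prop :=
  ∀ ν ∈ E, ∀ σ ∈ X, IsFaceOf ν σ →
    ∃ ζ ∈ X, σ = coneHull (ζ ∪ ν) ∧ coneDim σ = coneDim ζ + 1

/-- A subdivision of a fan: a fan with the same support, every cone of which is contained in
a cone of the base. -/
def IsSubdivision (X' X : Set (Set (V n))) : Prop :=
  IsFan X' ∧ support X' = support X ∧ ∀ σ' ∈ X', ∃ σ ∈ X, σ' ⊆ σ

/-- A subdivision is efficient if it introduces no new rays. -/
def IsEfficient (X' X : Set (Set (V n))) : Prop := raysIn X' = raysIn X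

/-- `ψ` is a good (convex piecewise-linear) function for the subdivision `X'` relative to the
cones of the base fan `X`: on each cone `τ` of `X`, `ψ` is convex, linear on each cone of
`X'` contained in `τ`, and the maximal subcones of linearity of `ψ` inside `τ` are exactly
the cones of `X'` (i.e. any convex subset of `τ` on which `ψ` is linear lies in one of them). -/
def IsGoodFor (X X' : Set (Set (V n))) (ψ : V n → ℚ) : Prop :=
  ∀ τ ∈ X, ConvexOn ℚ τ ψ ∧
    (∀ σ' ∈ X', σ' ⊆ τ → ∃ m : (V n) →ₗ[ℚ] ℚ, ∀ x ∈ σ', ψ x = m x) ∧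
    (∀ (m : (V n) →ₗ[ℚ] ℚ) (t : Set (V n)), t ⊆ τ → Convex ℚ t →
      (∀ x ∈ t, ψ x = m x) → ∃ σ' ∈ X', σ' ⊆ τ ∧ t ⊆ σ')

/-- Sign conditions of a good sorting function with respect to the quadruple data on `X'`. -/
def SignedOn (X' B' C' H' : Set (Set (V n))) (ψ : V n → ℚ) : Prop :=
  (∀ ν ∈ B', ∀ x ∈ ν, 0 ≤ ψ x) ∧ (∀ ν ∈ C', ∀ x ∈ ν, ψ x ≤ 0) ∧
  (∀ ν ∈ raysIn X', ν ∉ B' → ν ∉ C' → ν ∉ H' → ∀ x ∈ ν, ψ x = 0)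

/-- Sign conditions restricted to the rays contained in a cone `τ`. -/
def SignedOnIn (τ : Set (V n)) (X' B' C' H' : Set (Set (V n))) (ψ : V n → ℚ) : Prop :=
  (∀ ν ∈ B', ν ⊆ τ → ∀ x ∈ ν, 0 ≤ ψ x) ∧ (∀ ν ∈ C', ν ⊆ τ → ∀ x ∈ ν, ψ x ≤ 0) ∧
  (∀ ν ∈ raysIn X', ν ⊆ τ → ν ∉ B' → ν ∉ C' → ν ∉ H' → ∀ x ∈ ν, ψ x = 0)

/-- A convex subdivision, with respect to a fan quadruple structure on `X'`. -/
def IsConvexSubdiv (X' X B' C' H' : Set (Set (V n))) : Prop :=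
  IsSubdivision X' X ∧ ∃ ψ : V n → ℚ, IsGoodFor X X' ψ ∧ SignedOn X' B' C' H' ψ

/-- A locally-convex subdivision: for each cone of the base there is a good sorting function
on that cone. -/
def IsLocallyConvexSubdiv (X' X B' C' H' : Set (Set (V n))) : Prop :=
  IsSubdivision X' X ∧
    ∀ τ ∈ X, ∃ ψ : V n → ℚ, IsGoodFor {τ} X' ψ ∧ SignedOnIn τ X' B' C' H' ψ

/-- Star subdivision of `X` at a ray `ν` contained in the support of `X`. -/
def starSubdiv (X : Set (Set (V n))) (ν : Set (V n)) : Set (Set (V n)) :=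
  {σ | σ ∈ X ∧ ¬ ν ⊆ σ} ∪
  {τ | ∃ σ ∈ X, ν ⊆ σ ∧ ∃ ξ, IsFaceOf ξ σ ∧ ¬ ν ⊆ ξ ∧ τ = coneHull (ξ ∪ ν)}

/-- The set `S` of facets used in the extension construction `Ext(𝔗, ν)`. -/
noncomputable def extS (τ ν : Set (V n)) : Set (Set (V n)) :=
  if coneDim (coneHull (τ ∪ ν)) = coneDim τ + 1 then {τ}
  else {ζ | (IsFaceOf ζ τ ∧ coneDim ζ + 1 = coneDim τ) ∧
    ∃ m : (V n) →ₗ[ℚ] ℚ, (∀ x ∈ ζ, m x = 0) ∧ (∃ v ∈ ν, v ≠ 0 ∧ m v = -1) ∧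
      ∀ x ∈ τ, x ∉ ζ → 0 < m x}

/-- All faces of cones of `extS τ ν`. -/
noncomputable def extFaces (τ ν : Set (V n)) : Set (Set (V n)) :=
  {ξ | ∃ ζ ∈ extS τ ν, IsFaceOf ξ ζ}

/-- The extension `Ext(𝔗, ν)` of the affine fan of `τ` by the ray `ν`. -/
noncomputable def Ext (τ ν : Set (V n)) : Set (Set (V n)) :=
  {ν} ∪ faces τ ∪ (fun ξ => coneHull (ξ ∪ ν)) '' extFaces τ ν

/-- The extension `Ext(𝔗', ν)` of a subdivision `𝒯'` of the affine fan of `τ` by the ray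
`ν`. -/
noncomputable def ExtSub (T' : Set (Set (V n))) (τ ν : Set (V n)) : Set (Set (V n)) :=
  {ν} ∪ T' ∪ (fun ξ => coneHull (ξ ∪ ν)) ''
    {ξ | ∃ ζ' ∈ T', (∃ ζ ∈ extS τ ν, ζ' ⊆ ζ) ∧ IsFaceOf ξ ζ'}

/-- Sequential convexity of a sequence of star subdivisions (the list gives the rays in the
order in which the star subdivisions are performed). -/
def SeqConvex (B C H : Set (Set (V n))) : Set (Set (V n)) → List (Set (V n)) → Prop
  | _, [] => True
  | X, ν :: rest =>
      IsLocallyConvexSubdiv (starSubdiv X ν) X B C H ∧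
      SeqConvex B C H (starSubdiv X ν) rest

lemma subset_coneHull (A : Set (V n)) : A ⊆ coneHull A := by
  intro x hx
  refine ⟨{x}, by simpa using hx, fun v => 1, by simp, by simp⟩

lemma coneHull_mono {A B : Set (V n)} (h : A ⊆ B) : coneHull A ⊆ coneHull B := by
  rintro x ⟨t, ht, c, hc, rfl⟩
  exact ⟨t, ht.trans h, c, hc, rfl⟩

lemma zero_mem_coneHull (A : Set (V n)) : (0 : V n) ∈ coneHull A :=
  ⟨∅, by simp, fun _ => 0, by simp, by simp⟩

lemma coneHull_empty : coneHull (∅ : Set (V n)) = {0} := by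
  ext x
  constructor
  · rintro ⟨t, ht, c, hc, rfl⟩
    have : t = ∅ := by
      rw [Finset.eq_empty_iff_forall_notMem]
      intro a ha; exact (ht ha).elim
    simp [this]
  · rintro rfl; exact zero_mem_coneHull _

lemma smul_mem_coneHull {A : Set (V n)} {x : V n} {a : ℚ} (ha : 0 ≤ a)
    (hx : x ∈ coneHull A) : a • x ∈ coneHull A := by
  obtain ⟨t, ht, c, hc, rfl⟩ := hx
  refine ⟨t, ht, fun v => a * c v, fun v hv => mul_nonneg ha (hc v hv), ?_⟩
  rw [Finset.smul_sum]
  exact Finset.sum_congr rfl fun v hv => by rw [smul_smul]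

lemma add_mem_coneHull {A : Set (V n)} {x y : V n}
    (hx : x ∈ coneHull A) (hy : y ∈ coneHull A) : x + y ∈ coneHull A := by
  classical
  obtain ⟨t₁, ht₁, c₁, hc₁, rfl⟩ := hx
  obtain ⟨t₂, ht₂, c₂, hc₂, rfl⟩ := hy
  refine ⟨t₁ ∪ t₂, by simp [Finset.coe_union, Set.union_subset ht₁ ht₂],
    fun v => (if v ∈ t₁ then c₁ v else 0) + (if v ∈ t₂ then c₂ v else 0), ?_, ?_⟩
  · intro v _
    have h1 : (0:ℚ) ≤ if v ∈ t₁ then c₁ v else 0 := by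
      split <;> simp_all [hc₁]
    have h2 : (0:ℚ) ≤ if v ∈ t₂ then c₂ v else 0 := by
      split <;> simp_all [hc₂]
    exact add_nonneg h1 h2
  · have key : ∀ (t' : Finset (V n)) (c : V n → ℚ), t' ⊆ t₁ ∪ t₂ →
        ∑ v ∈ t₁ ∪ t₂, (if v ∈ t' then c v else 0) • v = ∑ v ∈ t', c v • v := by
      intro t' c hsub
      have hh : ∀ v, (if v ∈ t' then c v else 0) • v = if v ∈ t' then c v • v else 0 := by
        intro v; split <;> simp
      simp_rw [hh]
      rw [Finset.sum_ite_mem, Finset.inter_eq_right.mpr hsub]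
    have e : ∀ v ∈ t₁ ∪ t₂,
        ((if v ∈ t₁ then c₁ v else 0) + (if v ∈ t₂ then c₂ v else 0)) • v
          = (if v ∈ t₁ then c₁ v else 0) • v + (if v ∈ t₂ then c₂ v else 0) • v := by
      intro v _; rw [add_smul]
    rw [Finset.sum_congr rfl e, Finset.sum_add_distrib]
    have e1 : ∑ v ∈ t₁ ∪ t₂, (if v ∈ t₁ then c₁ v else 0) • v = ∑ v ∈ t₁, c₁ v • v := by
      exact key t₁ c₁ Finset.subset_union_left
    have e2 : ∑ v ∈ t₁ ∪ t₂, (if v ∈ t₂ then c₂ v else 0) • v = ∑ v ∈ t₂, c₂ v • v := by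
      exact key t₂ c₂ Finset.subset_union_right
    rw [e1, e2]

lemma sum_mem_coneHull {A : Set (V n)} {ι : Type*} {t : Finset ι} {f : ι → V n}
    (h : ∀ i ∈ t, f i ∈ coneHull A) : ∑ i ∈ t, f i ∈ coneHull A := by
  classical
  induction t using Finset.induction_on with
  | empty => simpa using zero_mem_coneHull A
  | insert _ _ hni ih =>
    rename_i a s
    rw [Finset.sum_insert hni]
    exact add_mem_coneHull (h a (Finset.mem_insert_self a s))
      (ih fun i hi => h i (Finset.mem_insert_of_mem hi))

lemma coneHull_subset_of_subset_coneHull {A B : Set (V n)} (h : A ⊆ coneHull B) :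
    coneHull A ⊆ coneHull B := by
  rintro x ⟨t, ht, c, hc, rfl⟩
  exact sum_mem_coneHull fun v hv => smul_mem_coneHull (hc v hv) (h (ht hv))

lemma coneHull_coneHull (A : Set (V n)) : coneHull (coneHull A) = coneHull A :=
  le_antisymm (coneHull_subset_of_subset_coneHull le_rfl)
    (coneHull_mono (subset_coneHull A))

lemma coneHull_union_coneHull (A B : Set (V n)) :
    coneHull (coneHull A ∪ coneHull B) = coneHull (A ∪ B) := by
  refine le_antisymm (coneHull_subset_of_subset_coneHull ?_) (coneHull_mono ?_)
  · exact Set.union_subset (coneHull_mono Set.subset_union_left)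
      (coneHull_mono Set.subset_union_right)
  · exact Set.union_subset
      ((subset_coneHull A).trans Set.subset_union_left)
      ((subset_coneHull B).trans Set.subset_union_right)

lemma coneHull_union_zero (A : Set (V n)) : coneHull ({0} ∪ A) = coneHull A := by
  refine le_antisymm (coneHull_subset_of_subset_coneHull ?_) (coneHull_mono Set.subset_union_right)
  exact Set.union_subset (by rintro x rfl; exact zero_mem_coneHull A) (subset_coneHull A)

-- decomposition
lemma mem_coneHull_union {A B : Set (V n)} {x : V n} (hx : x ∈ coneHull (A ∪ B)) :
    ∃ y ∈ coneHull A, ∃ z ∈ coneHull B, x = y + z := by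
  classical
  obtain ⟨t, ht, c, hc, rfl⟩ := hx
  refine ⟨∑ v ∈ t.filter (· ∈ A), c v • v, ?_, ∑ v ∈ t.filter (· ∉ A), c v • v, ?_, ?_⟩
  · exact ⟨t.filter (· ∈ A), by intro a ha; simpa using (Finset.mem_filter.mp (by exact_mod_cast ha)).2,
      c, fun v hv => hc v (Finset.mem_filter.mp hv).1, rfl⟩
  · refine ⟨t.filter (· ∉ A), ?_, c, fun v hv => hc v (Finset.mem_filter.mp hv).1, rfl⟩
    intro a ha
    have ha' := Finset.mem_filter.mp (by exact_mod_cast ha)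
    rcases ht (by exact_mod_cast ha'.1) with h | h
    · exact absurd h ha'.2
    · exact h
  · rw [← Finset.sum_filter_add_sum_filter_not t (· ∈ A)]

-- the span of a coneHull
lemma span_coneHull (A : Set (V n)) :
    Submodule.span ℚ (coneHull A) = Submodule.span ℚ A := by
  refine le_antisymm (Submodule.span_le.mpr ?_) (Submodule.span_mono (subset_coneHull A))
  rintro x ⟨t, ht, c, hc, rfl⟩
  exact Submodule.sum_mem _ fun v hv =>
    Submodule.smul_mem _ _ (Submodule.subset_span (ht hv))

lemma coneHull_singleton (v : V n) : coneHull {v} = {x | ∃ t : ℚ, 0 ≤ t ∧ x = t • v} := by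
  ext x
  constructor
  · rintro ⟨t, ht, c, hc, rfl⟩
    rcases Finset.subset_singleton_iff.mp (by exact_mod_cast ht) with rfl | rfl
    · exact ⟨0, le_rfl, by simp⟩
    · exact ⟨c v, hc v (by simp), by simp⟩
  · rintro ⟨t, ht, rfl⟩
    exact smul_mem_coneHull ht (subset_coneHull _ rfl)

lemma ray_structure {ν : Set (V n)} (hν : IsRay ν) :
    ∃ v : V n, v ≠ 0 ∧ ν = coneHull {v} := by
  obtain ⟨⟨S, rfl⟩, hsc, hdim⟩ := hν
  -- span is 1-dimensional
  have hspan : Module.finrank ℚ (Submodule.span ℚ (S : Set (V n))) = 1 := by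
    have := hdim
    unfold coneDim at this
    rwa [span_coneHull] at this
  -- find nonzero generator
  have hS0 : ∃ s ∈ S, s ≠ (0 : V n) := by
    by_contra h
    push_neg at h
    have : Submodule.span ℚ (S : Set (V n)) ≤ ⊥ := by
      rw [Submodule.span_le]
      intro s hs
      simp [h s (by exact_mod_cast hs)]
    rw [le_bot_iff] at this
    rw [this] at hspan
    simp at hspan
  obtain ⟨v, hvS, hv0⟩ := hS0
  have hle : Submodule.span ℚ ({v} : Set (V n)) ≤ Submodule.span ℚ (S : Set (V n)) :=
    Submodule.span_mono (by simpa using hvS)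
  have heq : Submodule.span ℚ ({v} : Set (V n)) = Submodule.span ℚ (S : Set (V n)) := by
    apply Submodule.eq_of_le_of_finrank_eq hle
    rw [hspan, finrank_span_singleton hv0]
  -- every generator is a nonneg multiple of v
  have hmul : ∀ s ∈ S, ∃ t : ℚ, 0 ≤ t ∧ s = t • v := by
    intro s hs
    have : s ∈ Submodule.span ℚ ({v} : Set (V n)) := by
      rw [heq]; exact Submodule.subset_span (by exact_mod_cast hs)
    obtain ⟨t, rfl⟩ := Submodule.mem_span_singleton.mp this
    rcases le_or_gt 0 t with h | h
    · exact ⟨t, h, rfl⟩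
    · exfalso
      have h1 : t • v ∈ coneHull (S : Set (V n)) := subset_coneHull _ (by exact_mod_cast hs)
      have h2 : v ∈ coneHull (S : Set (V n)) := subset_coneHull _ (by exact_mod_cast hvS)
      have h3 : -(t • v) ∈ coneHull (S : Set (V n)) := by
        rw [← neg_smul]
        exact smul_mem_coneHull (by linarith) h2
      have := hsc _ h1 h3
      rw [smul_eq_zero] at this
      rcases this with h' | h'
      · exact absurd h' (ne_of_lt h)
      · exact hv0 h'
  refine ⟨v, hv0, le_antisymm ?_ ?_⟩
  · rintro x ⟨t, ht, c, hc, rfl⟩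
    refine sum_mem_coneHull ?_
    intro s hs
    obtain ⟨a, ha, hsa⟩ := hmul s (ht hs)
    have heq2 : c s • s = (c s * a) • v := by rw [hsa, smul_smul]
    rw [heq2, coneHull_singleton]
    exact ⟨c s * a, mul_nonneg (hc s hs) ha, rfl⟩
  · apply coneHull_mono
    intro x hx
    rw [Set.mem_singleton_iff] at hx
    subst hx
    exact hvS

lemma map_nonneg_coneHull {A : Set (V n)} (m : (V n) →ₗ[ℚ] ℚ)
    (h : ∀ s ∈ A, 0 ≤ m s) : ∀ x ∈ coneHull A, 0 ≤ m x := by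
  rintro x ⟨t, ht, c, hc, rfl⟩
  rw [map_sum]
  refine Finset.sum_nonneg fun v hv => ?_
  rw [map_smul]
  exact mul_nonneg (hc v hv) (h v (ht hv))

lemma map_zero_coneHull {A : Set (V n)} (m : (V n) →ₗ[ℚ] ℚ)
    (h : ∀ s ∈ A, m s = 0) : ∀ x ∈ coneHull A, m x = 0 := by
  rintro x ⟨t, ht, c, hc, rfl⟩
  rw [map_sum]
  refine Finset.sum_eq_zero fun v hv => ?_
  rw [map_smul, h v (ht hv), smul_eq_mul, mul_zero]

lemma IsFaceOf.subset {F σ : Set (V n)} (h : IsFaceOf F σ) : F ⊆ σ := by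
  obtain ⟨m, _, rfl⟩ := h
  exact fun x hx => hx.1

lemma IsFaceOf.refl (σ : Set (V n)) : IsFaceOf σ σ :=
  ⟨0, by simp, by simp⟩

lemma zero_mem_of_face {F τ : Set (V n)} (hτ : IsPolyCone τ) (h : IsFaceOf F τ) :
    (0 : V n) ∈ F := by
  obtain ⟨m, _, rfl⟩ := h
  obtain ⟨S, rfl⟩ := hτ
  exact ⟨zero_mem_coneHull _, by simp⟩

/-- Key structural lemma: a face of a finitely generated cone is the cone
on the generators killed by the functional. -/
lemma face_eq_coneHull_filter (S : Finset (V n)) (m : (V n) →ₗ[ℚ] ℚ)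
    (hm : ∀ s ∈ S, 0 ≤ m s) :
    {x ∈ coneHull (S : Set (V n)) | m x = 0}
      = coneHull ((S.filter (fun s => m s = 0) : Finset (V n)) : Set (V n)) := by
  classical
  apply le_antisymm
  · rintro x ⟨⟨t, ht, c, hc, rfl⟩, hx0⟩
    have hterm : ∀ v ∈ t, c v * m v = 0 := by
      rw [map_sum] at hx0
      have : ∀ v ∈ t, 0 ≤ c v * m v := fun v hv => mul_nonneg (hc v hv) (hm v (ht hv))
      intro v hv
      refine (Finset.sum_eq_zero_iff_of_nonneg this).mp ?_ v hv
      rw [← hx0]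
      exact Finset.sum_congr rfl fun w hw => by rw [map_smul]; rfl
    refine ⟨t.filter (fun s => m s = 0), ?_, c,
      fun v hv => hc v (Finset.mem_filter.mp hv).1, ?_⟩
    · intro a ha
      have ha' : a ∈ t.filter (fun s => m s = 0) := by exact_mod_cast ha
      rw [Finset.mem_filter] at ha'
      have : a ∈ S.filter (fun s => m s = 0) :=
        Finset.mem_filter.mpr ⟨by exact_mod_cast ht ha'.1, ha'.2⟩
      exact_mod_cast this
    · symm
      apply Finset.sum_filter_of_ne
      intro v hv hne
      by_contra h0
      have : c v = 0 := by
        have := hterm v hv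
        rcases mul_eq_zero.mp this with h | h
        · exact h
        · exact absurd h h0
      rw [this, zero_smul] at hne
      exact hne rfl
  · intro x hx
    constructor
    · refine coneHull_mono ?_ hx
      intro a ha
      have : a ∈ S.filter (fun s => m s = 0) := by exact_mod_cast ha
      exact_mod_cast Finset.mem_of_mem_filter a this
    · exact map_zero_coneHull m
        (fun s hs => (Finset.mem_filter.mp (Finset.mem_coe.mp hs)).2) x hx

lemma IsFaceOf.polyCone {F σ : Set (V n)} (hσ : IsPolyCone σ) (h : IsFaceOf F σ) :
    IsPolyCone F := by
  obtain ⟨S, rfl⟩ := hσ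
  obtain ⟨m, hm, rfl⟩ := h
  classical
  exact ⟨S.filter (fun s => m s = 0),
    face_eq_coneHull_filter S m (fun s hs => hm s (subset_coneHull _ hs))⟩

lemma faces_finite {σ : Set (V n)} (hσ : IsPolyCone σ) : (faces σ).Finite := by
  classical
  obtain ⟨S, rfl⟩ := hσ
  apply Set.Finite.subset
    (Set.Finite.image (fun T : Finset (V n) => coneHull (T : Set (V n)))
      (S.powerset.finite_toSet))
  rintro F ⟨m, hm, rfl⟩
  refine ⟨S.filter (fun s => m s = 0), ?_, ?_⟩
  · exact_mod_cast Finset.mem_powerset.mpr (Finset.filter_subset _ _)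
  · exact (face_eq_coneHull_filter S m (fun s hs => hm s (subset_coneHull _ hs))).symm

/-- Intersection of two faces, as a face of the first one. -/
lemma inter_face_of_faces {F F' σ : Set (V n)} (hF : IsFaceOf F σ) (hF' : IsFaceOf F' σ) :
    IsFaceOf (F ∩ F') F := by
  obtain ⟨m, hm, rfl⟩ := hF
  obtain ⟨m', hm', rfl⟩ := hF'
  refine ⟨m', fun x hx => hm' x hx.1, ?_⟩
  ext x
  constructor
  · rintro ⟨⟨hxσ, hxm⟩, ⟨-, hxm'⟩⟩
    exact ⟨⟨hxσ, hxm⟩, hxm'⟩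
  · rintro ⟨⟨hxσ, hxm⟩, hxm'⟩
    exact ⟨⟨hxσ, hxm⟩, ⟨hxσ, hxm'⟩⟩

/-- A face of σ contained in a face F of σ is a face of F. -/
lemma face_of_face_of_subset {F G σ : Set (V n)} (hF : IsFaceOf F σ) (hG : IsFaceOf G σ)
    (hsub : G ⊆ F) : IsFaceOf G F := by
  have := inter_face_of_faces hF hG
  rwa [Set.inter_eq_right.mpr hsub] at this

/-- Transitivity: a face of a face of a polyhedral cone is a face of the cone. -/
lemma IsFaceOf.trans {G F σ : Set (V n)} (hσ : IsPolyCone σ)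
    (hGF : IsFaceOf G F) (hFσ : IsFaceOf F σ) : IsFaceOf G σ := by
  classical
  obtain ⟨S, rfl⟩ := hσ
  obtain ⟨m, hm, rfl⟩ := hFσ
  obtain ⟨m', hm', rfl⟩ := hGF
  set N : ℚ := 1 + ∑ s ∈ S, (if 0 < m s then (1 + |m' s|) / m s else 0) with hN
  have hterm_nonneg : ∀ s ∈ S, 0 ≤ (if 0 < m s then (1 + |m' s|) / m s else 0) := by
    intro s _
    split
    · positivity
    · exact le_rfl
  have hNpos : ∀ s ∈ S, 0 < m s → 0 < m' s + N * m s := by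
    intro s hs hms
    have hterm : (1 + |m' s|) / m s ≤ ∑ s ∈ S, (if 0 < m s then (1 + |m' s|) / m s else 0) := by
      have := Finset.single_le_sum hterm_nonneg hs
      simpa [if_pos hms] using this
    have hNge : (1 + |m' s|) / m s ≤ N := by
      rw [hN]; linarith
    have h1 : 1 + |m' s| ≤ N * m s := by
      rw [div_le_iff₀ hms] at hNge
      linarith
    have h2 : -(m' s) ≤ |m' s| := neg_le_abs _
    linarith
  set M : (V n) →ₗ[ℚ] ℚ := m' + N • m with hM
  have hMs : ∀ s ∈ S, 0 ≤ M s := by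
    intro s hs
    have hms : 0 ≤ m s := hm s (subset_coneHull _ hs)
    rcases eq_or_lt_of_le hms with h | h
    · have hsF : s ∈ {x ∈ coneHull (S : Set (V n)) | m x = 0} :=
        ⟨subset_coneHull _ hs, h.symm⟩
      have := hm' s hsF
      simp only [hM, LinearMap.add_apply, LinearMap.smul_apply, smul_eq_mul]
      rw [← h]
      linarith
    · have := hNpos s hs h
      simp only [hM, LinearMap.add_apply, LinearMap.smul_apply, smul_eq_mul]
      linarith
  have hMσ : ∀ x ∈ coneHull (S : Set (V n)), 0 ≤ M x := map_nonneg_coneHull M hMs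
  refine ⟨M, hMσ, ?_⟩
  have hMfilter : ∀ s ∈ S, M s = 0 → (m s = 0 ∧ m' s = 0) := by
    intro s hs hMs0
    have hms : 0 ≤ m s := hm s (subset_coneHull _ hs)
    rcases eq_or_lt_of_le hms with h | h
    · constructor
      · exact h.symm
      · have : M s = m' s + N * m s := by
          simp [hM]
        rw [this, ← h] at hMs0
        linarith
    · exact absurd hMs0 (ne_of_gt (by
        have := hNpos s hs h
        simp only [hM, LinearMap.add_apply, LinearMap.smul_apply, smul_eq_mul]
        linarith))
  ext x
  constructor
  · rintro ⟨⟨hτ, hm0⟩, hm'0⟩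
    refine ⟨hτ, ?_⟩
    simp only [hM, LinearMap.add_apply, LinearMap.smul_apply, smul_eq_mul, hm0, hm'0]
    ring
  · rintro ⟨hτ, hM0⟩
    -- x lies in the cone generated by generators with M s = 0
    have hx' : x ∈ coneHull ((S.filter (fun s => M s = 0) : Finset (V n)) : Set (V n)) := by
      rw [← face_eq_coneHull_filter S M hMs]
      exact ⟨hτ, hM0⟩
    have hgen : ∀ s ∈ (S.filter (fun s => M s = 0) : Finset (V n)), m s = 0 ∧ m' s = 0 := by
      intro s hs
      exact hMfilter s (Finset.mem_of_mem_filter s hs) (Finset.mem_filter.mp hs).2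
    have hxm : m x = 0 :=
      map_zero_coneHull m (fun s hs => (hgen s (by exact_mod_cast hs)).1) x hx'
    have hxm' : m' x = 0 :=
      map_zero_coneHull m' (fun s hs => (hgen s (by exact_mod_cast hs)).2) x hx'
    exact ⟨⟨hτ, hxm⟩, hxm'⟩

/-- Existence of a dual functional vanishing on a submodule and equal to 1 at a
vector outside it. -/
lemma exists_dual_vanishing {W : Submodule ℚ (V n)} {v : V n} (hv : v ∉ W) :
    ∃ m : (V n) →ₗ[ℚ] ℚ, (∀ w ∈ W, m w = 0) ∧ m v = 1 := by
  obtain ⟨f, hfv, hfW⟩ := Submodule.exists_dual_map_eq_bot_of_notMem hv inferInstance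
  refine ⟨(f v)⁻¹ • f, ?_, by simp [hfv]⟩
  intro w hw
  have : f w ∈ W.map f := Submodule.mem_map_of_mem hw
  rw [hfW] at this
  simp only [Submodule.mem_bot] at this
  simp [this]

/-- Farkas' lemma. -/
lemma farkas : ∀ (k : ℕ) (S : Finset (V n)) (x : V n), S.card ≤ k →
    x ∉ coneHull (S : Set (V n)) →
    ∃ m : (V n) →ₗ[ℚ] ℚ, (∀ s ∈ S, 0 ≤ m s) ∧ m x < 0 := by
  classical
  intro k
  induction k with
  | zero =>
    intro S x hcard hx
    have hS : S = ∅ := Finset.card_eq_zero.mp (Nat.le_zero.mp hcard)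
    subst hS
    have hx0 : x ≠ 0 := fun h => hx (h ▸ zero_mem_coneHull _)
    obtain ⟨m, -, hmv⟩ := exists_dual_vanishing (W := ⊥) (by simpa using hx0)
    exact ⟨-m, by simp, by simp [hmv]⟩
  | succ k ih =>
    intro S x hcard hx
    rcases Finset.eq_empty_or_nonempty S with rfl | ⟨s, hs⟩
    · have hx0 : x ≠ 0 := fun h => hx (h ▸ zero_mem_coneHull _)
      obtain ⟨m, -, hmv⟩ := exists_dual_vanishing (W := ⊥) (by simpa using hx0)
      exact ⟨-m, by simp, by simp [hmv]⟩
    set S' := S.erase s with hS'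
    have hcard' : S'.card ≤ k := by
      rw [hS', Finset.card_erase_of_mem hs]
      omega
    have hxS' : x ∉ coneHull (S' : Set (V n)) := fun h =>
      hx (coneHull_mono (by exact_mod_cast Finset.erase_subset s S) h)
    obtain ⟨m, hmS', hmx⟩ := ih S' x hcard' hxS'
    rcases le_or_gt 0 (m s) with hms | hms
    · refine ⟨m, ?_, hmx⟩
      intro s' hs'
      rcases eq_or_ne s' s with rfl | hne
      · exact hms
      · exact hmS' s' (Finset.mem_erase.mpr ⟨hne, hs'⟩)
    · -- m s < 0 : project along s
      set p : V n →ₗ[ℚ] V n := LinearMap.id - (m s)⁻¹ • (LinearMap.smulRight m s) with hp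
      have hpy : ∀ y, p y = y - ((m s)⁻¹ * m y) • s := by
        intro y
        simp [hp, LinearMap.smulRight_apply, sub_eq_sub_iff_sub_eq_sub, smul_smul]
      have hmp : ∀ y, m (p y) = 0 := by
        intro y
        rw [hpy, map_sub, map_smul, smul_eq_mul]
        rw [mul_comm ((m s)⁻¹) (m y), mul_assoc, inv_mul_cancel₀ (ne_of_lt hms), mul_one,
          sub_self]
      have hps : p s = 0 := by
        rw [hpy]
        rw [inv_mul_cancel₀ (ne_of_lt hms)]
        simp
      set S'' := S'.image p with hS''
      have hcard'' : S''.card ≤ k := le_trans (Finset.card_image_le) hcard'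
      -- p x ∉ coneHull S''
      have hpx : p x ∉ coneHull (S'' : Set (V n)) := by
        intro hmem
        apply hx
        -- x = p x + ((m x)/(m s)) • s, and p x ∈ coneHull S, coefficient ≥ 0
        have hcoef : (0:ℚ) ≤ (m s)⁻¹ * m x := by
          have h1 : (m s)⁻¹ < 0 := inv_lt_zero.mpr hms
          nlinarith
        have hSsub : (S'' : Set (V n)) ⊆ coneHull (S : Set (V n)) := by
          intro w hw
          obtain ⟨s', hs'S', rfl⟩ := Finset.mem_image.mp (by exact_mod_cast hw)
          rw [hpy]
          have hcoef' : (0:ℚ) ≤ -((m s)⁻¹ * m s') := by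
            have h1 : (m s)⁻¹ < 0 := inv_lt_zero.mpr hms
            have h2 : 0 ≤ m s' := hmS' s' hs'S'
            nlinarith
          rw [sub_eq_add_neg, ← neg_smul]
          exact add_mem_coneHull
            (subset_coneHull _ (by exact_mod_cast Finset.mem_of_mem_erase hs'S'))
            (smul_mem_coneHull hcoef' (subset_coneHull _ (by exact_mod_cast hs)))
        have hpxS : p x ∈ coneHull (S : Set (V n)) := by
          obtain ⟨t, ht, c, hc, heq⟩ := hmem
          rw [heq]
          exact sum_mem_coneHull fun w hw =>
            smul_mem_coneHull (hc w hw) (hSsub (ht hw))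
        have hxeq : x = p x + ((m s)⁻¹ * m x) • s := by
          rw [hpy]; abel
        rw [hxeq]
        exact add_mem_coneHull hpxS
          (smul_mem_coneHull hcoef (subset_coneHull _ (by exact_mod_cast hs)))
      obtain ⟨m', hm'S'', hm'px⟩ := ih S'' (p x) hcard'' hpx
      refine ⟨m'.comp p, ?_, hm'px⟩
      intro s' hs'
      rcases eq_or_ne s' s with rfl | hne
      · rw [LinearMap.comp_apply, hps, map_zero]
      · exact hm'S'' (p s')
          (by exact_mod_cast Finset.mem_image_of_mem p (Finset.mem_erase.mpr ⟨hne, hs'⟩))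

/-- A strongly convex polyhedral cone admits a functional positive away from 0. -/
lemma exists_strict_functional {S : Finset (V n)}
    (hsc : StronglyConvex (coneHull (S : Set (V n)))) :
    ∃ m : (V n) →ₗ[ℚ] ℚ, (∀ x ∈ coneHull (S : Set (V n)), 0 ≤ m x) ∧
      ∀ x ∈ coneHull (S : Set (V n)), m x = 0 → x = 0 := by
  classical
  have key : ∀ s : V n, s ∈ S → s ≠ 0 →
      ∃ m : (V n) →ₗ[ℚ] ℚ, (∀ s' ∈ S, 0 ≤ m s') ∧ 0 < m s := by
    intro s hs hs0
    have hns : -s ∉ coneHull (S : Set (V n)) := by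
      intro h
      exact hs0 (hsc s (subset_coneHull _ hs) h)
    obtain ⟨m, hmS, hmx⟩ := farkas S.card S (-s) le_rfl hns
    refine ⟨m, hmS, ?_⟩
    rw [map_neg] at hmx
    linarith
  set g : V n → (V n →ₗ[ℚ] ℚ) := fun s =>
    if h : s ∈ S ∧ s ≠ 0 then Classical.choose (key s h.1 h.2) else 0 with hg
  have hg1 : ∀ s, ∀ s' ∈ S, 0 ≤ g s s' := by
    intro s s' hs'
    by_cases h : s ∈ S ∧ s ≠ 0
    · simp only [hg, dif_pos h]
      exact (Classical.choose_spec (key s h.1 h.2)).1 s' hs'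
    · simp [hg, dif_neg h]
  have hg2 : ∀ s ∈ S, s ≠ 0 → 0 < g s s := by
    intro s hs hs0
    simp only [hg, dif_pos (show s ∈ S ∧ s ≠ 0 from ⟨hs, hs0⟩)]
    exact (Classical.choose_spec (key s hs hs0)).2
  set m : V n →ₗ[ℚ] ℚ := ∑ s ∈ S, g s with hm
  have hmS : ∀ s' ∈ S, 0 ≤ m s' := by
    intro s' hs'
    rw [hm]
    simp only [LinearMap.coe_sum, Finset.sum_apply]
    exact Finset.sum_nonneg (fun s _ => hg1 s s' hs')
  have hmstrict : ∀ s ∈ S, s ≠ 0 → 0 < m s := by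
    intro s hs hs0
    rw [hm]
    simp only [LinearMap.coe_sum, Finset.sum_apply]
    calc (0:ℚ) < g s s := hg2 s hs hs0
    _ ≤ ∑ s' ∈ S, g s' s := Finset.single_le_sum (fun s' _ => hg1 s' s hs) hs
  refine ⟨m, map_nonneg_coneHull m hmS, ?_⟩
  rintro x ⟨t, ht, c, hc, rfl⟩ hx0
  rw [map_sum] at hx0
  have hterms : ∀ v ∈ t, c v * m v = 0 := by
    intro v hv
    have hnn : ∀ v ∈ t, 0 ≤ c v * m v := fun v hv =>
      mul_nonneg (hc v hv) (hmS v (ht hv))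
    refine (Finset.sum_eq_zero_iff_of_nonneg hnn).mp ?_ v hv
    rw [← hx0]
    exact Finset.sum_congr rfl fun w _ => by rw [map_smul]; rfl
  refine Finset.sum_eq_zero ?_
  intro v hv
  by_cases h0 : v = 0
  · rw [h0, smul_zero]
  · have : c v = 0 := by
      rcases mul_eq_zero.mp (hterms v hv) with h | h
      · exact h
      · exact absurd h (ne_of_gt (hmstrict v (ht hv) h0))
    rw [this, zero_smul]

lemma coneDim_singleton_zero : coneDim ({0} : Set (V n)) = 0 := by
  unfold coneDim
  rw [Submodule.span_zero_singleton]
  exact finrank_bot ℚ (V n)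

/-- dimension jump when adding a ray outside the span. -/
lemma coneDim_coneHull_union_ray {A : Set (V n)} {v : V n} (hv0 : v ≠ 0)
    (hv : v ∉ Submodule.span ℚ A) :
    coneDim (coneHull (A ∪ coneHull {v})) = coneDim (coneHull A) + 1 := by
  unfold coneDim
  rw [span_coneHull, Submodule.span_union, span_coneHull]
  have hspan : Submodule.span ℚ ({v} : Set (V n)) = ℚ ∙ v := rfl
  have hdisj : Submodule.span ℚ A ⊓ Submodule.span ℚ ({v} : Set (V n)) = ⊥ := by
    rw [eq_bot_iff]
    rintro x ⟨hx1, hx2⟩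
    obtain ⟨a, rfl⟩ := Submodule.mem_span_singleton.mp hx2
    rcases eq_or_ne a 0 with rfl | ha
    · simp
    · exfalso
      apply hv
      have : a⁻¹ • (a • v) ∈ Submodule.span ℚ A := Submodule.smul_mem _ _ hx1
      rwa [smul_smul, inv_mul_cancel₀ ha, one_smul] at this
  have := Submodule.finrank_sup_add_finrank_inf_eq
    (Submodule.span ℚ A) (Submodule.span ℚ ({v} : Set (V n)))
  rw [hdisj] at this
  rw [finrank_span_singleton hv0] at this
  simp only [finrank_bot, add_zero] at this
  rw [span_coneHull]
  omega

lemma not_mem_span_of_functional {A : Set (V n)} {v : V n} (m : (V n) →ₗ[ℚ] ℚ)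
    (hA : ∀ y ∈ A, m y = 0) (hv : m v = 1) : v ∉ Submodule.span ℚ A := by
  intro hmem
  have : Submodule.span ℚ A ≤ LinearMap.ker m := by
    rw [Submodule.span_le]
    intro y hy
    simpa using hA y hy
  have := this hmem
  simp only [LinearMap.mem_ker] at this
  rw [hv] at this
  norm_num at this

lemma IsPolyCone.hull_eq {σ : Set (V n)} (h : IsPolyCone σ) : coneHull σ = σ := by
  obtain ⟨S, rfl⟩ := h
  exact coneHull_coneHull _

lemma coneDim_coneHull (A : Set (V n)) : coneDim (coneHull A) = coneDim A := by
  unfold coneDim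
  rw [span_coneHull]

/-- data attached to a cone of `extS`. -/
lemma extS_data {τ ν : Set (V n)} {v : V n} (hτ : IsPolyCone τ) (hv0 : v ≠ 0)
    (hνv : ν = coneHull {v}) :
    ∀ ζ ∈ extS τ ν, IsFaceOf ζ τ ∧ ∃ β : (V n) →ₗ[ℚ] ℚ,
      β v = 1 ∧ (∀ y ∈ ζ, β y = 0) ∧ (∀ x ∈ τ, β x ≤ 0) := by
  intro ζ hζ
  unfold extS at hζ
  split_ifs at hζ with hdim
  · -- ζ = τ ; the dimension grows, so v ∉ span τ
    rw [Set.mem_singleton_iff] at hζ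
    subst hζ
    have hvτ : v ∉ Submodule.span ℚ ζ := by
      intro hmem
      have hsp : Submodule.span ℚ (ζ ∪ ν) = Submodule.span ℚ ζ := by
        rw [Submodule.span_union, hνv, span_coneHull]
        rw [sup_eq_left, Submodule.span_le]
        intro x hx
        rw [Set.mem_singleton_iff] at hx
        subst hx
        exact hmem
      rw [show coneDim (coneHull (ζ ∪ ν)) = coneDim ζ from by
        rw [coneDim_coneHull]; unfold coneDim; rw [hsp]] at hdim
      omega
    obtain ⟨β, hβW, hβv⟩ := exists_dual_vanishing hvτ
    refine ⟨IsFaceOf.refl ζ, β, hβv, ?_, ?_⟩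
    · exact fun y hy => hβW y (Submodule.subset_span hy)
    · intro x hx
      rw [hβW x (Submodule.subset_span hx)]
  · obtain ⟨⟨hface, -⟩, m, hmζ, ⟨v', hv'ν, hv'0, hmv'⟩, hmpos⟩ := hζ
    -- v' = t • v with t > 0
    rw [hνv, coneHull_singleton] at hv'ν
    obtain ⟨t, ht, rfl⟩ := hv'ν
    have ht0 : 0 < t := lt_of_le_of_ne ht (by rintro rfl; simp at hv'0)
    have hmv : m v = -t⁻¹ := by
      rw [map_smul, smul_eq_mul] at hmv'
      field_simp at hmv' ⊢
      linarith
    have hmvneg : m v < 0 := by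
      rw [hmv]
      simp only [neg_neg, Left.neg_neg_iff]
      positivity
    refine ⟨hface, (m v)⁻¹ • m, ?_, ?_, ?_⟩
    · simp only [LinearMap.smul_apply, smul_eq_mul]
      rw [inv_mul_cancel₀ (ne_of_lt hmvneg)]
    · intro y hy
      simp only [LinearMap.smul_apply, smul_eq_mul, hmζ y hy, mul_zero]
    · intro x hx
      have hmx : 0 ≤ m x := by
        by_cases h : x ∈ ζ
        · rw [hmζ x h]
        · exact le_of_lt (hmpos x hx h)
      simp only [LinearMap.smul_apply, smul_eq_mul]
      have : (m v)⁻¹ ≤ 0 := le_of_lt (inv_lt_zero.mpr hmvneg)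
      exact mul_nonpos_of_nonpos_of_nonneg this hmx

/-- data attached to a cone of `extFaces`. -/
lemma extFaces_data {τ ν : Set (V n)} {v : V n} (hτ : IsPolyCone τ) (hv0 : v ≠ 0)
    (hνv : ν = coneHull {v}) :
    ∀ ξ ∈ extFaces τ ν, IsFaceOf ξ τ ∧ ∃ β : (V n) →ₗ[ℚ] ℚ,
      β v = 1 ∧ (∀ y ∈ ξ, β y = 0) ∧ (∀ x ∈ τ, β x ≤ 0) := by
  rintro ξ ⟨ζ, hζ, hξζ⟩
  obtain ⟨hζτ, β, hβv, hβζ, hβτ⟩ := extS_data hτ hv0 hνv ζ hζ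
  exact ⟨hξζ.trans hτ hζτ, β, hβv, fun y hy => hβζ y (hξζ.subset hy), hβτ⟩

/-- `Ext(𝔗, ν)` is a fan; if `𝔗` is `E`-simplicial then `Ext(𝔗, ν)` is
`(E ∪ {ν})`-simplicial. -/
theorem ext_isFan_and_simplicial {n : ℕ} (τ ν : Set (V n))
    (hτ : IsPolyCone τ) (hsc : StronglyConvex τ)
    (hν : IsRay ν) (hns : ¬ ν ⊆ τ) (hsc' : StronglyConvex (coneHull (τ ∪ ν))) :
    IsFan (Ext τ ν) ∧
      ∀ E ⊆ raysOf τ, ESimplicialOn (faces τ) E → ESimplicialOn (Ext τ ν) (E ∪ {ν}) := by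
  obtain ⟨v, hv0, hνv⟩ := ray_structure hν
  have hτhull : coneHull τ = τ := hτ.hull_eq
  have hνhull : coneHull ν = ν := by rw [hνv, coneHull_coneHull]
  have hvν : v ∈ ν := by rw [hνv]; exact subset_coneHull _ rfl
  have hmemν : ∀ x : V n, x ∈ ν ↔ ∃ t : ℚ, 0 ≤ t ∧ x = t • v := by
    intro x
    rw [hνv, coneHull_singleton]
    exact Iff.rfl
  have hsmulτ : ∀ (a : ℚ), 0 ≤ a → ∀ x ∈ τ, a • x ∈ τ := by
    intro a ha x hx
    rw [← hτhull] at hx ⊢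
    exact smul_mem_coneHull ha hx
  have hvτ : v ∉ τ := by
    intro hvmem
    apply hns
    intro x hx
    obtain ⟨t, ht, rfl⟩ := (hmemν x).mp hx
    exact hsmulτ t ht v hvmem
  have h0τ : (0 : V n) ∈ τ := by rw [← hτhull]; exact zero_mem_coneHull τ
  have h0ν : (0 : V n) ∈ ν := by rw [← hνhull]; exact zero_mem_coneHull ν
  have hντ : ν ∩ τ = {0} := by
    apply le_antisymm
    · rintro x ⟨hxν, hxτ⟩
      obtain ⟨t, ht, rfl⟩ := (hmemν x).mp hxν
      rcases eq_or_lt_of_le ht with h | h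
      · rw [← h, zero_smul]; rfl
      · exfalso
        apply hvτ
        have := hsmulτ t⁻¹ (le_of_lt (inv_pos.mpr h)) _ hxτ
        rwa [smul_smul, inv_mul_cancel₀ (ne_of_gt h), one_smul] at this
    · rintro x rfl
      exact ⟨h0ν, h0τ⟩
  -- strict functional on τ
  obtain ⟨mτ, hmτ1, hmτ2⟩ : ∃ m : (V n) →ₗ[ℚ] ℚ, (∀ x ∈ τ, 0 ≤ m x) ∧
      ∀ x ∈ τ, m x = 0 → x = 0 := by
    obtain ⟨S, hS⟩ := hτ
    obtain ⟨m, h1, h2⟩ := exists_strict_functional (S := S) (hS ▸ hsc)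
    exact ⟨m, by rw [hS]; exact h1, by rw [hS]; exact h2⟩
  have hzeroface : IsFaceOf {0} τ := by
    refine ⟨mτ, hmτ1, ?_⟩
    apply le_antisymm
    · rintro x rfl
      exact ⟨h0τ, map_zero mτ⟩
    · rintro x ⟨hxτ, hx0⟩
      exact hmτ2 x hxτ hx0
  have hzf : ∀ F, IsFaceOf F τ → IsFaceOf {0} F := by
    intro F hF
    refine ⟨mτ, fun x hx => hmτ1 x (hF.subset hx), ?_⟩
    apply le_antisymm
    · rintro x rfl
      exact ⟨zero_mem_of_face hτ hF, map_zero mτ⟩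
    · rintro x ⟨hxF, hx0⟩
      exact hmτ2 x (hF.subset hxF) hx0
  -- functional cutting {0} out of ν
  obtain ⟨mv, -, hmv⟩ := exists_dual_vanishing (W := (⊥ : Submodule ℚ (V n)))
    (by simpa using hv0)
  have hzfν : IsFaceOf {0} ν := by
    refine ⟨mv, ?_, ?_⟩
    · intro x hx
      obtain ⟨t, ht, rfl⟩ := (hmemν x).mp hx
      rw [map_smul, smul_eq_mul, hmv, mul_one]
      exact ht
    · apply le_antisymm
      · rintro x rfl
        exact ⟨h0ν, map_zero mv⟩
      · rintro x ⟨hxν, hx0⟩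
        obtain ⟨t, ht, rfl⟩ := (hmemν x).mp hxν
        rw [map_smul, smul_eq_mul, hmv, mul_one] at hx0
        rw [hx0, zero_smul]
        rfl
  -- data for extFaces
  have hSD := extS_data hτ hv0 hνv
  have hPKG := extFaces_data hτ hv0 hνv
  have hEFτ : ∀ ξ ∈ extFaces τ ν, IsFaceOf ξ τ := fun ξ h => (hPKG ξ h).1
  have hEFpoly : ∀ ξ ∈ extFaces τ ν, IsPolyCone ξ :=
    fun ξ h => (hEFτ ξ h).polyCone hτ
  have hEFhull : ∀ ξ ∈ extFaces τ ν, coneHull ξ = ξ :=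
    fun ξ h => (hEFpoly ξ h).hull_eq
  have hEFclosed : ∀ ξ ∈ extFaces τ ν, ∀ G, IsFaceOf G ξ → G ∈ extFaces τ ν := by
    rintro ξ ⟨ζ, hζ, hξζ⟩ G hG
    exact ⟨ζ, hζ, hG.trans ((hSD ζ hζ).1.polyCone hτ) hξζ⟩
  have hνJ : ∀ ξ : Set (V n), ν ⊆ coneHull (ξ ∪ ν) :=
    fun ξ => fun x hx => subset_coneHull _ (Or.inr hx)
  have hξJ : ∀ ξ : Set (V n), ξ ⊆ coneHull (ξ ∪ ν) :=
    fun ξ => fun x hx => subset_coneHull _ (Or.inl hx)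
  have hmemJ : ∀ ξ ∈ extFaces τ ν, ∀ x : V n,
      x ∈ coneHull (ξ ∪ ν) ↔ ∃ y ∈ ξ, ∃ t : ℚ, 0 ≤ t ∧ x = y + t • v := by
    intro ξ hξ x
    constructor
    · intro hx
      obtain ⟨y, hy, z, hz, rfl⟩ := mem_coneHull_union hx
      rw [hEFhull ξ hξ] at hy
      rw [hνhull] at hz
      obtain ⟨t, ht, rfl⟩ := (hmemν z).mp hz
      exact ⟨y, hy, t, ht, rfl⟩
    · rintro ⟨y, hy, t, ht, rfl⟩
      exact add_mem_coneHull (hξJ ξ hy)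
        (smul_mem_coneHull ht (hνJ ξ hvν))
  have hINT : ∀ ξ ∈ extFaces τ ν, coneHull (ξ ∪ ν) ∩ τ = ξ := by
    intro ξ hξ
    obtain ⟨hξτ, β, hβv, hβξ, hβτ⟩ := hPKG ξ hξ
    apply le_antisymm
    · rintro x ⟨hxJ, hxτ⟩
      obtain ⟨y, hy, t, ht, rfl⟩ := (hmemJ ξ hξ _).mp hxJ
      have hβx : β (y + t • v) = t := by
        rw [map_add, map_smul, smul_eq_mul, hβv, hβξ y hy, mul_one, zero_add]
      have : t ≤ 0 := hβx ▸ hβτ _ hxτ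
      have ht0 : t = 0 := le_antisymm this ht
      rw [ht0, zero_smul, add_zero]
      exact hy
    · intro x hx
      exact ⟨hξJ ξ hx, hξτ.subset hx⟩
  have hFJ : ∀ ξ ∈ extFaces τ ν, IsFaceOf ξ (coneHull (ξ ∪ ν)) := by
    intro ξ hξ
    obtain ⟨hξτ, β, hβv, hβξ, hβτ⟩ := hPKG ξ hξ
    refine ⟨β, ?_, ?_⟩
    · intro x hx
      obtain ⟨y, hy, t, ht, rfl⟩ := (hmemJ ξ hξ _).mp hx
      rw [map_add, map_smul, smul_eq_mul, hβv, hβξ y hy, mul_one, zero_add]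
      exact ht
    · apply le_antisymm
      · intro x hx
        exact ⟨hξJ ξ hx, hβξ x hx⟩
      · rintro x ⟨hxJ, hx0⟩
        obtain ⟨y, hy, t, ht, rfl⟩ := (hmemJ ξ hξ _).mp hxJ
        rw [map_add, map_smul, smul_eq_mul, hβv, hβξ y hy, mul_one, zero_add] at hx0
        rw [hx0, zero_smul, add_zero]
        exact hy
  have hpolyJ : ∀ ξ ∈ extFaces τ ν, IsPolyCone (coneHull (ξ ∪ ν)) := by
    intro ξ hξ
    classical
    obtain ⟨T, hT⟩ := hEFpoly ξ hξ
    refine ⟨insert v T, ?_⟩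
    rw [hT, hνv, coneHull_union_coneHull]
    congr 1
    rw [Finset.coe_insert]
    rw [Set.insert_eq, Set.union_comm]
  have hdimJ : ∀ ξ ∈ extFaces τ ν, coneDim (coneHull (ξ ∪ ν)) = coneDim ξ + 1 := by
    intro ξ hξ
    obtain ⟨hξτ, β, hβv, hβξ, hβτ⟩ := hPKG ξ hξ
    have hvsp : v ∉ Submodule.span ℚ ξ := not_mem_span_of_functional β hβξ hβv
    have := coneDim_coneHull_union_ray hv0 hvsp
    rw [← hνv, coneDim_coneHull ξ] at this
    exact this
  have hsubJτ : ∀ ξ ∈ extFaces τ ν, coneHull (ξ ∪ ν) ⊆ coneHull (τ ∪ ν) :=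
    fun ξ hξ => coneHull_mono (Set.union_subset_union_left ν (hEFτ ξ hξ).subset)
  -- ν is a face of every joined cone
  have hνfaceJ : ∀ ξ ∈ extFaces τ ν, IsFaceOf ν (coneHull (ξ ∪ ν)) := by
    intro ξ hξ
    obtain ⟨hξτ, β, hβv, hβξ, hβτ⟩ := hPKG ξ hξ
    set μ : (V n) →ₗ[ℚ] ℚ := mτ - (mτ v) • β with hμ
    have hμcalc : ∀ y ∈ ξ, ∀ t : ℚ, μ (y + t • v) = mτ y := by
      intro y hy t
      simp only [hμ, LinearMap.sub_apply, LinearMap.smul_apply, smul_eq_mul,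
        map_add, map_smul]
      rw [hβξ y hy, hβv]
      ring
    refine ⟨μ, ?_, ?_⟩
    · intro x hx
      obtain ⟨y, hy, t, ht, rfl⟩ := (hmemJ ξ hξ _).mp hx
      rw [hμcalc y hy t]
      exact hmτ1 y (hξτ.subset hy)
    · apply le_antisymm
      · intro x hx
        refine ⟨hνJ ξ hx, ?_⟩
        obtain ⟨t, ht, rfl⟩ := (hmemν x).mp hx
        have := hμcalc 0 (zero_mem_of_face hτ hξτ) t
        rw [zero_add] at this
        rw [this, map_zero]
      · rintro x ⟨hxJ, hx0⟩
        obtain ⟨y, hy, t, ht, rfl⟩ := (hmemJ ξ hξ _).mp hxJ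
        rw [hμcalc y hy t] at hx0
        have : y = 0 := hmτ2 y (hξτ.subset hy) hx0
        rw [this, zero_add]
        exact (hmemν _).mpr ⟨t, ht, rfl⟩
  -- intersection of two joined cones
  have hJJint : ∀ ξ ∈ extFaces τ ν, ∀ ξ' ∈ extFaces τ ν,
      coneHull (ξ ∪ ν) ∩ coneHull (ξ' ∪ ν) = coneHull ((ξ ∩ ξ') ∪ ν) := by
    have key : ∀ ξ ∈ extFaces τ ν, ∀ ξ' ∈ extFaces τ ν, ∀ x,
        x ∈ coneHull (ξ ∪ ν) → x ∈ coneHull (ξ' ∪ ν) →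
        ∀ y ∈ ξ, ∀ t : ℚ, 0 ≤ t → x = y + t • v →
        ∀ y' ∈ ξ', ∀ t' : ℚ, 0 ≤ t' → x = y' + t' • v → t ≤ t' := by
      intro ξ hξ ξ' hξ' x hx hx' y hy t ht hxeq y' hy' t' ht' hxeq'
      obtain ⟨hξτ, β, hβv, hβξ, hβτ⟩ := hPKG ξ hξ
      have h1 : β x = t := by
        rw [hxeq, map_add, map_smul, smul_eq_mul, hβv, hβξ y hy, mul_one, zero_add]
      have h2 : β x = β y' + t' := by
        rw [hxeq', map_add, map_smul, smul_eq_mul, hβv, mul_one]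
      have h3 : β y' ≤ 0 := hβτ y' ((hEFτ ξ' hξ').subset hy')
      rw [h1] at h2
      linarith
    intro ξ hξ ξ' hξ'
    apply le_antisymm
    · rintro x ⟨hx, hx'⟩
      obtain ⟨y, hy, t, ht, hxeq⟩ := (hmemJ ξ hξ _).mp hx
      obtain ⟨y', hy', t', ht', hxeq'⟩ := (hmemJ ξ' hξ' _).mp hx'
      have htt' : t = t' := le_antisymm
        (key ξ hξ ξ' hξ' x hx hx' y hy t ht hxeq y' hy' t' ht' hxeq')
        (key ξ' hξ' ξ hξ x hx' hx y' hy' t' ht' hxeq' y hy t ht hxeq)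
      have hyy' : y = y' := by
        subst htt'
        have := hxeq ▸ hxeq'
        exact add_right_cancel (hxeq ▸ hxeq' : y + t • v = y' + t • v)
      rw [hxeq]
      refine add_mem_coneHull (subset_coneHull _ (Or.inl ⟨hy, hyy' ▸ hy'⟩))
        (smul_mem_coneHull ht (subset_coneHull _ (Or.inr hvν)))
    · intro x hx
      exact ⟨coneHull_mono (Set.union_subset_union_left ν Set.inter_subset_left) hx,
        coneHull_mono (Set.union_subset_union_left ν Set.inter_subset_right) hx⟩
  -- the intersection is a face of each joined cone
  have hJJface : ∀ ξ ∈ extFaces τ ν, ∀ ξ' ∈ extFaces τ ν,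
      IsFaceOf (coneHull ((ξ ∩ ξ') ∪ ν)) (coneHull (ξ ∪ ν)) := by
    intro ξ hξ ξ' hξ'
    obtain ⟨hξτ, β, hβv, hβξ, hβτ⟩ := hPKG ξ hξ
    obtain ⟨m', hm'τ, hm'ξ'⟩ := hEFτ ξ' hξ'
    set γ : (V n) →ₗ[ℚ] ℚ := m' - (m' v) • β with hγ
    have hγcalc : ∀ y ∈ ξ, ∀ t : ℚ, γ (y + t • v) = m' y := by
      intro y hy t
      simp only [hγ, LinearMap.sub_apply, LinearMap.smul_apply, smul_eq_mul,
        map_add, map_smul]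
      rw [hβξ y hy, hβv]
      ring
    refine ⟨γ, ?_, ?_⟩
    · intro x hx
      obtain ⟨y, hy, t, ht, rfl⟩ := (hmemJ ξ hξ _).mp hx
      rw [hγcalc y hy t]
      exact hm'τ y (hξτ.subset hy)
    · apply le_antisymm
      · intro x hx
        constructor
        · exact coneHull_mono (Set.union_subset_union_left ν Set.inter_subset_left) hx
        · refine map_zero_coneHull γ ?_ x hx
          rintro s (⟨hsξ, hsξ'⟩ | hsν)
          · have hsm' : m' s = 0 := by
              rw [hm'ξ'] at hsξ'
              exact hsξ'.2
            have h1 : γ s = m' s := by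
              have := hγcalc s hsξ 0
              rwa [zero_smul, add_zero] at this
            rw [h1, hsm']
          · obtain ⟨t, ht, rfl⟩ := (hmemν s).mp hsν
            have := hγcalc 0 (zero_mem_of_face hτ hξτ) t
            rw [zero_add] at this
            rw [this, map_zero]
      · rintro x ⟨hxJ, hx0⟩
        obtain ⟨y, hy, t, ht, rfl⟩ := (hmemJ ξ hξ _).mp hxJ
        rw [hγcalc y hy t] at hx0
        have hyξ' : y ∈ ξ' := by
          rw [hm'ξ']
          exact ⟨hξτ.subset hy, hx0⟩
        exact add_mem_coneHull (subset_coneHull _ (Or.inl ⟨hy, hyξ'⟩))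
          (smul_mem_coneHull ht (subset_coneHull _ (Or.inr hvν)))
  -- faces of joined cones
  have hfaceJclosed : ∀ ξ ∈ extFaces τ ν, ∀ G, IsFaceOf G (coneHull (ξ ∪ ν)) →
      (∃ ξ'' ∈ extFaces τ ν, G = coneHull (ξ'' ∪ ν)) ∨ IsFaceOf G τ := by
    intro ξ hξ G hG
    obtain ⟨m, hm, hGeq⟩ := hG
    have hmξ : ∀ y ∈ ξ, 0 ≤ m y := fun y hy => hm y (hξJ ξ hy)
    have hξ''face : IsFaceOf {x ∈ ξ | m x = 0} ξ := ⟨m, hmξ, rfl⟩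
    have hξ''mem : {x ∈ ξ | m x = 0} ∈ extFaces τ ν := hEFclosed ξ hξ _ hξ''face
    have hmv0 : 0 ≤ m v := hm v (hνJ ξ hvν)
    rcases eq_or_lt_of_le hmv0 with hmv | hmv
    · -- m v = 0 : G is the join of a face of ξ with ν
      left
      refine ⟨{x ∈ ξ | m x = 0}, hξ''mem, ?_⟩
      rw [hGeq]
      apply le_antisymm
      · rintro x ⟨hxJ, hx0⟩
        obtain ⟨y, hy, t, ht, rfl⟩ := (hmemJ ξ hξ _).mp hxJ
        have hmy : m y = 0 := by
          rw [map_add, map_smul, smul_eq_mul, ← hmv] at hx0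
          rw [mul_zero, add_zero] at hx0
          exact hx0
        exact add_mem_coneHull (subset_coneHull _ (Or.inl ⟨hy, hmy⟩))
          (smul_mem_coneHull ht (subset_coneHull _ (Or.inr hvν)))
      · intro x hx
        constructor
        · exact coneHull_mono
            (Set.union_subset_union_left ν (fun x hx => hx.1)) hx
        · refine map_zero_coneHull m ?_ x hx
          rintro s (⟨-, hs0⟩ | hsν)
          · exact hs0
          · obtain ⟨t, ht, rfl⟩ := (hmemν s).mp hsν
            rw [map_smul, smul_eq_mul, ← hmv, mul_zero]
    · -- m v > 0 : G is a face of ξ, hence of τ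
      right
      have : G = {x ∈ ξ | m x = 0} := by
        rw [hGeq]
        apply le_antisymm
        · rintro x ⟨hxJ, hx0⟩
          obtain ⟨y, hy, t, ht, rfl⟩ := (hmemJ ξ hξ _).mp hxJ
          have hym : 0 ≤ m y := hmξ y hy
          rw [map_add, map_smul, smul_eq_mul] at hx0
          have htv : 0 ≤ t * m v := mul_nonneg ht (le_of_lt hmv)
          have hmy : m y = 0 := by linarith
          have ht0 : t = 0 := by
            have : t * m v = 0 := by linarith
            rcases mul_eq_zero.mp this with h | h
            · exact h
            · exact absurd h (ne_of_gt hmv)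
          rw [ht0, zero_smul, add_zero]
          exact ⟨hy, hmy⟩
        · rintro x ⟨hxξ, hx0⟩
          exact ⟨hξJ ξ hxξ, hx0⟩
      rw [this]
      exact hξ''face.trans hτ (hEFτ ξ hξ)
  -- membership in Ext
  have hExtMem : ∀ σ : Set (V n), σ ∈ Ext τ ν ↔
      σ = ν ∨ IsFaceOf σ τ ∨ ∃ ξ ∈ extFaces τ ν, σ = coneHull (ξ ∪ ν) := by
    intro σ
    unfold Ext
    constructor
    · rintro ((h | h) | ⟨ξ, hξ, rfl⟩)
      · exact Or.inl h
      · exact Or.inr (Or.inl h)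
      · exact Or.inr (Or.inr ⟨ξ, hξ, rfl⟩)
    · rintro (h | h | ⟨ξ, hξ, rfl⟩)
      · exact Or.inl (Or.inl h)
      · exact Or.inl (Or.inr h)
      · exact Or.inr ⟨ξ, hξ, rfl⟩
  have hνExt : ν ∈ Ext τ ν := (hExtMem ν).mpr (Or.inl rfl)
  have hfExt : ∀ F, IsFaceOf F τ → F ∈ Ext τ ν :=
    fun F hF => (hExtMem F).mpr (Or.inr (Or.inl hF))
  have hjExt : ∀ ξ ∈ extFaces τ ν, coneHull (ξ ∪ ν) ∈ Ext τ ν :=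
    fun ξ hξ => (hExtMem _).mpr (Or.inr (Or.inr ⟨ξ, hξ, rfl⟩))
  -- the six helper claims assembled into the fan axioms
  have hfan : IsFan (Ext τ ν) := by
    refine ⟨?_, ?_, ?_, ?_⟩
    · -- finiteness
      have h1 : ({ν} : Set (Set (V n))).Finite := Set.finite_singleton ν
      have h2 : (faces τ).Finite := faces_finite hτ
      have h3 : ((fun ξ => coneHull (ξ ∪ ν)) '' extFaces τ ν).Finite := by
        apply Set.Finite.image
        apply h2.subset
        intro ξ hξ
        exact hEFτ ξ hξ
      exact (h1.union h2).union h3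
    · -- cones
      intro σ hσ
      rcases (hExtMem σ).mp hσ with rfl | h | ⟨ξ, hξ, rfl⟩
      · exact ⟨hν.1, hν.2.1⟩
      · refine ⟨h.polyCone hτ, ?_⟩
        intro x hx hnx
        exact hsc x (h.subset hx) (h.subset hnx)
      · refine ⟨hpolyJ ξ hξ, ?_⟩
        intro x hx hnx
        exact hsc' x (hsubJτ ξ hξ hx) (hsubJτ ξ hξ hnx)
    · -- face closure
      intro σ hσ G hG
      rcases (hExtMem σ).mp hσ with hσν | h | ⟨ξ, hξ, hσJ⟩
      · -- faces of ν
        rw [hσν] at hG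
        obtain ⟨m, hm, hGeq⟩ := hG
        have hmv0 : 0 ≤ m v := hm v hvν
        rcases eq_or_lt_of_le hmv0 with hmv | hmv
        · have : G = ν := by
            rw [hGeq]
            apply le_antisymm
            · rintro x ⟨hxν, -⟩
              exact hxν
            · intro x hx
              refine ⟨hx, ?_⟩
              obtain ⟨t, ht, rfl⟩ := (hmemν x).mp hx
              rw [map_smul, smul_eq_mul, ← hmv, mul_zero]
          rw [this]
          exact hνExt
        · have : G = {0} := by
            rw [hGeq]
            apply le_antisymm
            · rintro x ⟨hxν, hx0⟩
              obtain ⟨t, ht, rfl⟩ := (hmemν x).mp hxν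
              rw [map_smul, smul_eq_mul] at hx0
              have ht0 : t = 0 := by
                rcases mul_eq_zero.mp hx0 with h | h
                · exact h
                · exact absurd h (ne_of_gt hmv)
              rw [ht0, zero_smul]
              rfl
            · rintro x rfl
              exact ⟨h0ν, map_zero m⟩
          rw [this]
          exact hfExt {0} hzeroface
      · exact hfExt G (hG.trans hτ h)
      · rw [hσJ] at hG
        rcases hfaceJclosed ξ hξ G hG with ⟨ξ'', hξ'', rfl⟩ | h
        · exact hjExt ξ'' hξ''
        · exact hfExt G h
    · -- intersections
      have key : ∀ σ ∈ Ext τ ν, ∀ σ' ∈ Ext τ ν, IsFaceOf (σ ∩ σ') σ := by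
        intro σ hσ σ' hσ'
        rcases (hExtMem σ).mp hσ with hσν | hF | ⟨ξ, hξ, hσJ⟩ <;>
          rcases (hExtMem σ').mp hσ' with hσν' | hF' | ⟨ξ', hξ', hσJ'⟩
        · rw [hσν, hσν', Set.inter_self]
          exact IsFaceOf.refl ν
        · rw [hσν]
          have : ν ∩ σ' = {0} := by
            apply le_antisymm
            · rintro x ⟨hx1, hx2⟩
              rw [← hντ]
              exact ⟨hx1, hF'.subset hx2⟩
            · rintro x rfl
              exact ⟨h0ν, zero_mem_of_face hτ hF'⟩
          rw [this]
          exact hzfν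
        · rw [hσν, hσJ', Set.inter_eq_left.mpr (hνJ ξ')]
          exact IsFaceOf.refl _
        · rw [hσν']
          have : σ ∩ ν = {0} := by
            apply le_antisymm
            · rintro x ⟨hx1, hx2⟩
              rw [← hντ]
              exact ⟨hx2, hF.subset hx1⟩
            · rintro x rfl
              exact ⟨zero_mem_of_face hτ hF, h0ν⟩
          rw [this]
          exact hzf σ hF
        · exact inter_face_of_faces hF hF'
        · rw [hσJ']
          have : σ ∩ coneHull (ξ' ∪ ν) = σ ∩ ξ' := by
            apply le_antisymm
            · rintro x ⟨hx1, hx2⟩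
              refine ⟨hx1, ?_⟩
              rw [← hINT ξ' hξ']
              exact ⟨hx2, hF.subset hx1⟩
            · rintro x ⟨hx1, hx2⟩
              exact ⟨hx1, hξJ ξ' hx2⟩
          rw [this]
          exact inter_face_of_faces hF (hEFτ ξ' hξ')
        · rw [hσJ, hσν', Set.inter_eq_right.mpr (hνJ ξ)]
          exact hνfaceJ ξ hξ
        · rw [hσJ]
          have : coneHull (ξ ∪ ν) ∩ σ' = ξ ∩ σ' := by
            apply le_antisymm
            · rintro x ⟨hx1, hx2⟩
              refine ⟨?_, hx2⟩
              rw [← hINT ξ hξ]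
              exact ⟨hx1, hF'.subset hx2⟩
            · rintro x ⟨hx1, hx2⟩
              exact ⟨hξJ ξ hx1, hx2⟩
          rw [this]
          exact (inter_face_of_faces (hEFτ ξ hξ) hF').trans (hpolyJ ξ hξ) (hFJ ξ hξ)
        · rw [hσJ, hσJ', hJJint ξ hξ ξ' hξ']
          exact hJJface ξ hξ ξ' hξ'
      intro σ hσ σ' hσ'
      refine ⟨key σ hσ σ' hσ', ?_⟩
      rw [Set.inter_comm]
      exact key σ' hσ' σ hσ
  refine ⟨hfan, ?_⟩
  -- simpliciality
  intro E hE hEs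
  intro ρ hρ σ hσ hface
  rcases hρ with hρE | hρν
  · -- ρ is a ray of τ in E
    have hρray : IsRayOf ρ τ := hE hρE
    have hρτ : IsFaceOf ρ τ := hρray.1
    rcases (hExtMem σ).mp hσ with hσν | hF | ⟨ξ, hξ, hσJ⟩
    · -- impossible: ρ ⊆ ν ∩ τ = {0} but dim ρ = 1
      exfalso
      rw [hσν] at hface
      have hsub : ρ ⊆ ({0} : Set (V n)) := by
        rw [← hντ]
        intro x hx
        exact ⟨hface.subset hx, hρτ.subset hx⟩
      have : coneDim ρ = 0 := by
        unfold coneDim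
        have h1 : Submodule.span ℚ ρ ≤ ⊥ := by
          rw [← Submodule.span_zero_singleton (R := ℚ) (M := V n)]
          exact Submodule.span_mono hsub
        rw [le_bot_iff] at h1
        rw [h1]
        exact finrank_bot ℚ (V n)
      rw [hρray.2] at this
      exact one_ne_zero this
    · obtain ⟨η, hη, heq, hdim⟩ := hEs ρ hρE σ hF hface
      exact ⟨η, hfExt η hη, heq, hdim⟩
    · -- σ is a joined cone
      rw [hσJ] at hface ⊢
      have hρsubξ : ρ ⊆ ξ := by
        intro x hx
        rw [← hINT ξ hξ]
        exact ⟨hface.subset hx, hρτ.subset hx⟩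
      have hρξ : IsFaceOf ρ ξ := face_of_face_of_subset (hFJ ξ hξ) hface hρsubξ
      obtain ⟨η, hη, hξeq, hdim⟩ := hEs ρ hρE ξ (hEFτ ξ hξ) hρξ
      have hηsubξ : η ⊆ ξ := by
        rw [hξeq]
        exact fun x hx => subset_coneHull _ (Or.inl hx)
      have hηξ : IsFaceOf η ξ := face_of_face_of_subset (hEFτ ξ hξ) hη hηsubξ
      have hηmem : η ∈ extFaces τ ν := hEFclosed ξ hξ η hηξ
      refine ⟨coneHull (η ∪ ν), hjExt η hηmem, ?_, ?_⟩
      · rw [hξeq]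
        have hρhull : coneHull ρ = ρ := (hρτ.polyCone hτ).hull_eq
        have hηhull : coneHull η = η := ((hη.polyCone hτ)).hull_eq
        calc coneHull (coneHull (η ∪ ρ) ∪ ν)
            = coneHull (coneHull (η ∪ ρ) ∪ coneHull ν) := by rw [hνhull]
          _ = coneHull ((η ∪ ρ) ∪ ν) := coneHull_union_coneHull _ _
          _ = coneHull ((η ∪ ν) ∪ ρ) := by rw [Set.union_right_comm]
          _ = coneHull (coneHull (η ∪ ν) ∪ coneHull ρ) := by
              rw [coneHull_union_coneHull]
          _ = coneHull (coneHull (η ∪ ν) ∪ ρ) := by rw [hρhull]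
      · rw [hdimJ ξ hξ, hdim, hdimJ η hηmem]
  · -- ρ = ν
    rw [Set.mem_singleton_iff] at hρν
    rw [hρν] at hface ⊢
    rcases (hExtMem σ).mp hσ with hσν | hF | ⟨ξ, hξ, hσJ⟩
    · rw [hσν]
      refine ⟨{0}, hfExt {0} hzeroface, ?_, ?_⟩
      · rw [coneHull_union_zero, hνhull]
      · rw [hν.2.2, coneDim_singleton_zero]
    · exfalso
      exact hns ((hface.subset).trans hF.subset)
    · rw [hσJ]
      refine ⟨ξ, hfExt ξ (hEFτ ξ hξ), rfl, hdimJ ξ hξ⟩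

end ToricPaper
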